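/- arXiv:2505.13067 — 2 statements merged into one kernel-verified Lean document; each statement's English description precedes it below -/
import Mathlib

section
/- If a process tensor's Choi state across the bipartition between the two time segments is entangled (not separable), then the process tensor cannot be written as a composition of conditioned instruments T[A] = Σᵢ Φᵢ(A(Iᵢ(ρ₀))), i.e. the process requires quantum memory. -/
open Matrix
open scoped Kronecker Classical ComplexOrder

noncomputable section

/-- A density matrix: positive semidefinite with unit trace. -/
def IsDensity {N : Type*} [Fintype N] (ρ : Matrix N N ℂ) : Prop :=
  ρ.PosSemidef ∧ ρ.trace = 1

/-- Outer product `|ψ⟩⟨ψ|`. -/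
def outer {N : Type*} (ψ : N → ℂ) : Matrix N N ℂ :=
  Matrix.of fun i j => ψ i * star (ψ j)

/-- Squared norm of a vector. -/
def vnormSq {N : Type*} [Fintype N] (ψ : N → ℂ) : ℝ := ∑ x, ‖ψ x‖ ^ 2

/-- Partial transpose with respect to the first tensor factor. -/
def pt₁ {m n : Type*} (ρ : Matrix (m × n) (m × n) ℂ) : Matrix (m × n) (m × n) ℂ :=
  Matrix.of fun p q => ρ (q.1, p.2) (p.1, q.2)

/-- Partial transpose with respect to the second tensor factor. -/
def pt₂ {m n : Type*} (ρ : Matrix (m × n) (m × n) ℂ) : Matrix (m × n) (m × n) ℂ :=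
  Matrix.of fun p q => ρ (p.1, q.2) (q.1, p.2)

/-- Partial trace over the first tensor factor. -/
def ptr₁ {m n : Type*} [Fintype m] (ρ : Matrix (m × n) (m × n) ℂ) : Matrix n n ℂ :=
  Matrix.of fun j l => ∑ i, ρ (i, j) (i, l)

/-- Partial trace over the second tensor factor. -/
def ptr₂ {m n : Type*} [Fintype n] (ρ : Matrix (m × n) (m × n) ℂ) : Matrix m m ℂ :=
  Matrix.of fun i k => ∑ j, ρ (i, j) (k, j)

/-- Trace norm (sum of singular values): `‖A‖₁ = tr √(AᴴA)`. -/
def traceNorm {N : Type*} [Fintype N] [DecidableEq N] (A : Matrix N N ℂ) : ℝ :=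
  (((Matrix.posSemidef_conjTranspose_mul_self A).1.eigenvectorUnitary.1 *
      diagonal (((↑) : ℝ → ℂ) ∘ (Real.sqrt ·) ∘
        (Matrix.posSemidef_conjTranspose_mul_self A).1.eigenvalues) *
      (star (Matrix.posSemidef_conjTranspose_mul_self A).1.eigenvectorUnitary :
        Matrix N N ℂ)).trace).re

/-- Purity `tr ρ²` (real part). -/
def purity {N : Type*} [Fintype N] (ρ : Matrix N N ℂ) : ℝ := ((ρ * ρ).trace).re

/-- Separability of a bipartite density matrix. -/
def Separable {m n : Type*} [Fintype m] [Fintype n]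
    (ρ : Matrix (m × n) (m × n) ℂ) : Prop :=
  ∃ (k : ℕ) (p : Fin k → ℝ) (σ : Fin k → Matrix m m ℂ) (τ : Fin k → Matrix n n ℂ),
    (∀ i, 0 ≤ p i) ∧ (∑ i, p i = 1) ∧ (∀ i, IsDensity (σ i)) ∧ (∀ i, IsDensity (τ i)) ∧
    ρ = ∑ i, (p i : ℂ) • (σ i ⊗ₖ τ i)

/-- Extension `E ⊗ id` of a map on the first factor to a bipartite space. -/
def tensExtA {s n : Type*} (E : Matrix s s ℂ → Matrix s s ℂ)
    (X : Matrix (s × n) (s × n) ℂ) : Matrix (s × n) (s × n) ℂ :=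
  Matrix.of fun p q => E (Matrix.of fun i k => X (i, p.2) (k, q.2)) p.1 q.1

/-- Extension `id ⊗ A` of a map on the second factor to a bipartite space. -/
def tensExtSys {e s : Type*} (A : Matrix s s ℂ → Matrix s s ℂ)
    (X : Matrix (e × s) (e × s) ℂ) : Matrix (e × s) (e × s) ℂ :=
  Matrix.of fun p q => A (Matrix.of fun i k => X (p.1, i) (q.1, k)) p.2 q.2

/-- Complete positivity: `E ⊗ id_n` maps PSD matrices to PSD matrices for every `n`. -/
def IsCP {s : Type*} [Fintype s] (E : Matrix s s ℂ → Matrix s s ℂ) : Prop :=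
  ∀ (n : ℕ) (X : Matrix (s × Fin n) (s × Fin n) ℂ), X.PosSemidef → (tensExtA E X).PosSemidef

/-- Trace preservation. -/
def IsTP {s : Type*} [Fintype s] (E : Matrix s s ℂ → Matrix s s ℂ) : Prop :=
  ∀ X, (E X).trace = X.trace

/-- The maximally entangled unit vector `|Ψ⁺⟩ = (1/√d) Σᵢ |i⟩⊗|i⟩`. -/
def maxEntVec (d : ℕ) : Fin d × Fin d → ℂ :=
  fun p => if p.1 = p.2 then (((Real.sqrt d)⁻¹ : ℝ) : ℂ) else 0

/-- The Choi state `χ[E] = (E ⊗ id)(|Ψ⁺⟩⟨Ψ⁺|)` of a map `E`. -/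
def ChoiMap {d : ℕ} (E : Matrix (Fin d) (Fin d) ℂ → Matrix (Fin d) (Fin d) ℂ) :
    Matrix (Fin d × Fin d) (Fin d × Fin d) ℂ :=
  tensExtA E (outer (maxEntVec d))

/-- Choi state of a single-intervention process tensor `T`, viewed as a function of the
initial system state and the intervention (a CP map). The first index pair is the first
time segment (intervention input leg, initial state leg), the second pair is the second
time segment (final state leg, intervention output leg). It is obtained by letting `T`
act on halves of maximally entangled pairs, i.e. on matrix units with `1/d` weights. -/
def ChoiPT {d : ℕ}
    (T : Matrix (Fin d) (Fin d) ℂ →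
      (Matrix (Fin d) (Fin d) ℂ → Matrix (Fin d) (Fin d) ℂ) → Matrix (Fin d) (Fin d) ℂ) :
    Matrix ((Fin d × Fin d) × (Fin d × Fin d)) ((Fin d × Fin d) × (Fin d × Fin d)) ℂ :=
  Matrix.of fun p q => (d : ℂ)⁻¹ * (d : ℂ)⁻¹ *
    (T (Matrix.single p.1.2 q.1.2 1)
       (fun ρ => ρ p.1.1 q.1.1 • Matrix.single p.2.2 q.2.2 1)) p.2.1 q.2.1

/-- A single-intervention process tensor has classical memory if it is a composition of
conditioned instruments: `T[ρ, A] = Σᵢ Φᵢ(A(Iᵢ(ρ)))` with `{Iᵢ}` a quantum instrument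
(each `Iᵢ` CP, their sum trace preserving) and each `Φᵢ` a CPT map. -/
def HasClassicalMemory {d : ℕ}
    (T : Matrix (Fin d) (Fin d) ℂ →
      (Matrix (Fin d) (Fin d) ℂ → Matrix (Fin d) (Fin d) ℂ) → Matrix (Fin d) (Fin d) ℂ) :
    Prop :=
  ∃ (k : ℕ) (I Φ : Fin k → (Matrix (Fin d) (Fin d) ℂ → Matrix (Fin d) (Fin d) ℂ)),
    (∀ i, IsLinearMap ℂ (I i)) ∧ (∀ i, IsCP (I i)) ∧ IsTP (fun ρ => ∑ i, I i ρ) ∧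
    (∀ i, IsLinearMap ℂ (Φ i)) ∧ (∀ i, IsCP (Φ i)) ∧ (∀ i, IsTP (Φ i)) ∧
    (∀ ρ A, T ρ A = ∑ i, Φ i (A (I i ρ)))

/-- Action of a Kraus operator on the first factor of a bipartite vector: `(L ⊗ I)ψ`. -/
def lact {m n : Type*} [Fintype m] (L : Matrix m m ℂ) (ψ : m × n → ℂ) : m × n → ℂ :=
  fun p => ∑ i, L p.1 i * ψ (i, p.2)

/-- Concurrence of a pure bipartite state: `C(ψ) = √(2(1 − tr((tr₂|ψ⟩⟨ψ|)²)))`. -/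
def concPure {m n : Type*} [Fintype m] [Fintype n] (ψ : m × n → ℂ) : ℝ :=
  Real.sqrt (2 * (1 - purity (ptr₂ (outer ψ))))

/-- The set of average values `Σₖ pₖ f(ψₖ)` over all pure-state decompositions of `ρ`. -/
def decompAvgs {m n : Type*} [Fintype m] [Fintype n]
    (f : (m × n → ℂ) → ℝ) (ρ : Matrix (m × n) (m × n) ℂ) : Set ℝ :=
  { r | ∃ (k : ℕ) (p : Fin k → ℝ) (ψ : Fin k → m × n → ℂ),
      (∀ i, 0 < p i) ∧ (∑ i, p i = 1) ∧ (∀ i, vnormSq (ψ i) = 1) ∧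
      (ρ = ∑ i, (p i : ℂ) • outer (ψ i)) ∧ r = ∑ i, p i * f (ψ i) }

/-- An entanglement monotone: a nonnegative function of pure bipartite states whose
average does not increase under local CP operations (given by Kraus operators) on the
system (first) factor. -/
def IsEntMonotone {m n : Type*} [Fintype m] [Fintype n] (f : (m × n → ℂ) → ℝ) : Prop :=
  (∀ ψ, 0 ≤ f ψ) ∧
  ∀ (k : ℕ) (L : Fin k → Matrix m m ℂ), (∑ j, (L j)ᴴ * L j) = 1 →
    ∀ ψ : m × n → ℂ, vnormSq ψ = 1 →
      (∑ j, if vnormSq (lact (L j) ψ) = 0 then 0 else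
        vnormSq (lact (L j) ψ) *
          f (fun x => (((Real.sqrt (vnormSq (lact (L j) ψ)))⁻¹ : ℝ) : ℂ) * lact (L j) ψ x))
        ≤ f ψ

end

noncomputable section Helpers

/-- Outer products are positive semidefinite. -/
lemma outer_posSemidef {N : Type*} [Fintype N] (ψ : N → ℂ) : (outer ψ).PosSemidef := by
  refine Matrix.PosSemidef.of_dotProduct_mulVec_nonneg ?_ ?_
  · ext i j
    simp [outer, Matrix.conjTranspose_apply, mul_comm]
  · intro x
    have h : star x ⬝ᵥ (outer ψ).mulVec x
        = (∑ i, star (x i) * ψ i) * star (∑ i, star (x i) * ψ i) := by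
      simp only [dotProduct, Matrix.mulVec, Matrix.of_apply, outer, star_sum]
      rw [Finset.sum_mul_sum]
      refine Finset.sum_congr rfl fun i _ => ?_
      rw [Finset.mul_sum]
      refine Finset.sum_congr rfl fun j _ => ?_
      simp only [star_mul', star_star, Pi.star_apply]
      ring
    rw [h]
    exact mul_star_self_nonneg _

/-- PSD matrices have real nonnegative trace, zero only for the zero matrix. -/
lemma psd_trace_spec {N : Type*} [Fintype N] [DecidableEq N] {A : Matrix N N ℂ}
    (h : A.PosSemidef) :
    0 ≤ A.trace.re ∧ A.trace = (A.trace.re : ℂ) ∧ (A.trace.re = 0 → A = 0) := by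
  obtain ⟨B, rfl⟩ : ∃ B : Matrix N N ℂ, A = Bᴴ * B := by
    open scoped MatrixOrder in
    exact CStarAlgebra.nonneg_iff_eq_star_mul_self.mp (Matrix.nonneg_iff_posSemidef.mpr h)
  have htr : (Bᴴ * B).trace = ((∑ j, ∑ i, Complex.normSq (B i j) : ℝ) : ℂ) := by
    simp only [Matrix.trace, Matrix.diag, Matrix.mul_apply, Matrix.conjTranspose_apply]
    push_cast
    refine Finset.sum_congr rfl fun j _ => Finset.sum_congr rfl fun i _ => ?_
    rw [Complex.normSq_eq_conj_mul_self, Complex.star_def]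
  have hnn : 0 ≤ ∑ j, ∑ i, Complex.normSq (B i j) :=
    Finset.sum_nonneg fun j _ => Finset.sum_nonneg fun i _ => Complex.normSq_nonneg _
  have hre : (Bᴴ * B).trace.re = ∑ j, ∑ i, Complex.normSq (B i j) := by
    rw [htr]; exact Complex.ofReal_re _
  refine ⟨by rw [hre]; exact hnn, by rw [hre, htr], fun h0 => ?_⟩
  rw [hre] at h0
  have hB : B = 0 := by
    ext i j
    have h1 := (Finset.sum_eq_zero_iff_of_nonneg
      (fun j _ => Finset.sum_nonneg fun i _ => Complex.normSq_nonneg _)).mp h0 j (by simp)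
    have h2 := (Finset.sum_eq_zero_iff_of_nonneg
      (fun i _ => Complex.normSq_nonneg _)).mp h1 i (by simp)
    simpa using Complex.normSq_eq_zero.mp h2
  rw [hB]; simp

/-- Scaling a PSD matrix by a nonnegative real keeps it PSD. -/
lemma psd_smul_real {N : Type*} [Fintype N] {A : Matrix N N ℂ} (h : A.PosSemidef)
    {c : ℝ} (hc : 0 ≤ c) : ((c : ℂ) • A).PosSemidef := by
  refine Matrix.PosSemidef.of_dotProduct_mulVec_nonneg ?_ ?_
  · unfold Matrix.IsHermitian
    rw [Matrix.conjTranspose_smul, h.1.eq]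
    congr 1
    simp [Complex.star_def, Complex.conj_ofReal]
  · intro x
    rw [Matrix.smul_mulVec, dotProduct_smul, smul_eq_mul]
    exact mul_nonneg (by exact_mod_cast hc) (h.dotProduct_mulVec_nonneg x)

/-- Entrywise formula for the Choi state of a linear map. -/
lemma choiMap_apply {d : ℕ} (hd : 0 < d)
    {E : Matrix (Fin d) (Fin d) ℂ → Matrix (Fin d) (Fin d) ℂ} (hE : IsLinearMap ℂ E)
    (a b c e : Fin d) :
    ChoiMap E (a, b) (c, e) = (d : ℂ)⁻¹ * E (Matrix.single b e 1) a c := by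
  have hM : (Matrix.of fun i k => outer (maxEntVec d) (i, b) (k, e))
      = (d : ℂ)⁻¹ • Matrix.single b e (1 : ℂ) := by
    ext i k
    simp only [Matrix.of_apply, outer, maxEntVec, Matrix.smul_apply, Matrix.single,
      smul_eq_mul]
    by_cases hib : b = i <;> by_cases hke : e = k
    · subst hib; subst hke
      rw [if_pos rfl, if_pos rfl, if_pos ⟨rfl, rfl⟩, mul_one, RCLike.star_def,
        Complex.conj_ofReal, ← Complex.ofReal_mul, ← mul_inv,
        Real.mul_self_sqrt (Nat.cast_nonneg d), Complex.ofReal_inv, Complex.ofReal_natCast]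
    · simp [hke, Ne.symm hke]
    · simp [hib, Ne.symm hib]
    · simp [hib, Ne.symm hib]
  show tensExtA E (outer (maxEntVec d)) (a, b) (c, e) = _
  unfold tensExtA
  rw [Matrix.of_apply, hM, hE.map_smul]
  simp

/-- Trace formula for the Choi state of a linear map. -/
lemma choiMap_trace {d : ℕ}
    {E : Matrix (Fin d) (Fin d) ℂ → Matrix (Fin d) (Fin d) ℂ} (hE : IsLinearMap ℂ E)
    (hd : 0 < d) : (ChoiMap E).trace = (d : ℂ)⁻¹ * (E 1).trace := by
  have hone : (∑ b : Fin d, Matrix.single b b (1 : ℂ)) = 1 := by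
    ext i j
    simp only [Matrix.sum_apply, Matrix.single, Matrix.of_apply, Matrix.one_apply]
    by_cases hij : i = j
    · subst hij; simp
    · rw [if_neg hij]
      exact Finset.sum_eq_zero fun b _ => by
        by_cases hb : b = i
        · subst hb; simp [hij]
        · simp [hb]
  have hsum : E 1 = ∑ b : Fin d, E (Matrix.single b b (1 : ℂ)) := by
    conv_lhs => rw [← hone]
    exact map_sum (hE.mk' E) (fun b => Matrix.single b b (1 : ℂ)) Finset.univ
  have h1 : (ChoiMap E).trace
      = ∑ a : Fin d, ∑ b : Fin d, (d : ℂ)⁻¹ * E (Matrix.single b b 1) a a := by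
    rw [Matrix.trace, Fintype.sum_prod_type]
    exact Finset.sum_congr rfl fun a _ => Finset.sum_congr rfl fun b _ =>
      choiMap_apply hd hE a b a b
  rw [h1, Finset.sum_comm, hsum, Matrix.trace_sum, Finset.mul_sum]
  refine Finset.sum_congr rfl fun b _ => ?_
  rw [Matrix.trace, Finset.mul_sum]
  rfl

/-- The Choi state of a CP map is positive semidefinite. -/
lemma choiMap_posSemidef {d : ℕ}
    {E : Matrix (Fin d) (Fin d) ℂ → Matrix (Fin d) (Fin d) ℂ} (hE : IsCP E) :
    (ChoiMap E).PosSemidef :=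
  hE d (outer (maxEntVec d)) (outer_posSemidef _)

end Helpers

/-- if the Choi state of a process tensor is entangled across the cut
between the two time segments, the process cannot be written as a composition of
conditioned instruments, i.e. it requires quantum memory. -/
theorem stmt10 {d : ℕ} (hd : 0 < d)
    (T : Matrix (Fin d) (Fin d) ℂ →
      (Matrix (Fin d) (Fin d) ℂ → Matrix (Fin d) (Fin d) ℂ) → Matrix (Fin d) (Fin d) ℂ)
    (hent : ¬ Separable (ChoiPT T)) : ¬ HasClassicalMemory T := by
  intro hcm
  apply hent
  obtain ⟨k, I, Φ, hIlin, hICP, hITP, hΦlin, hΦCP, hΦTP, hT⟩ := hcm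
  have hdC : (d : ℂ) ≠ 0 := Nat.cast_ne_zero.mpr hd.ne'
  set C : Fin k → Matrix (Fin d × Fin d) (Fin d × Fin d) ℂ := fun i => ChoiMap (I i) with hC
  set D : Fin k → Matrix (Fin d × Fin d) (Fin d × Fin d) ℂ := fun i => ChoiMap (Φ i) with hD
  have hCpsd : ∀ i, (C i).PosSemidef := fun i => choiMap_posSemidef (hICP i)
  have hDpsd : ∀ i, (D i).PosSemidef := fun i => choiMap_posSemidef (hΦCP i)
  -- trace of D i is 1
  have hDtr : ∀ i, (D i).trace = 1 := by
    intro i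
    rw [hD, choiMap_trace (hΦlin i) hd, hΦTP i 1, Matrix.trace_one]
    simp [inv_mul_cancel₀ hdC]
  -- weights
  set p : Fin k → ℝ := fun i => (C i).trace.re with hp
  have hspec : ∀ i, 0 ≤ p i ∧ (C i).trace = ((p i : ℝ) : ℂ) ∧ (p i = 0 → C i = 0) :=
    fun i => psd_trace_spec (hCpsd i)
  have hpsumC : (∑ i, (C i).trace) = 1 := by
    have h1 : (∑ i, (C i).trace) = (d : ℂ)⁻¹ * (∑ i, (I i 1).trace) := by
      rw [Finset.mul_sum]
      exact Finset.sum_congr rfl fun i _ => choiMap_trace (hIlin i) hd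
    have h2 : (∑ i, (I i 1).trace) = (d : ℂ) := by
      have := hITP 1
      rw [Matrix.trace_sum] at this
      rw [this, Matrix.trace_one]
      simp
    rw [h1, h2, inv_mul_cancel₀ hdC]
  have hpsum : ∑ i, p i = 1 := by
    have : ((∑ i, p i : ℝ) : ℂ) = 1 := by
      push_cast
      rw [← hpsumC]
      exact Finset.sum_congr rfl fun i _ => ((hspec i).2.1).symm
    exact_mod_cast this
  -- normalized states
  set σ : Fin k → Matrix (Fin d × Fin d) (Fin d × Fin d) ℂ :=
    fun i => if p i = 0 then ((d * d : ℝ)⁻¹ : ℂ) • 1 else (((p i)⁻¹ : ℝ) : ℂ) • C i with hσ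
  have hCσ : ∀ i, (p i : ℂ) • σ i = C i := by
    intro i
    by_cases h0 : p i = 0
    · rw [hσ]; simp only [if_pos h0, h0, (hspec i).2.2 h0]; simp
    · rw [hσ]; simp only [if_neg h0]
      rw [smul_smul, ← Complex.ofReal_mul, mul_inv_cancel₀ h0]
      simp
  refine ⟨k, p, σ, D, fun i => (hspec i).1, hpsum, ?_, ?_, ?_⟩
  · -- σ i is a density matrix
    intro i
    by_cases h0 : p i = 0
    · rw [hσ]; simp only [if_pos h0]
      constructor
      · rw [← Complex.ofReal_inv]
        exact psd_smul_real Matrix.PosSemidef.one (inv_nonneg.mpr (by positivity))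
      · rw [Matrix.trace_smul, Matrix.trace_one, smul_eq_mul]
        have hcard : (Fintype.card (Fin d × Fin d) : ℂ) = (d : ℂ) * d := by
          simp [Fintype.card_prod]
        rw [hcard]
        push_cast
        field_simp
    · rw [hσ]; simp only [if_neg h0]
      constructor
      · exact psd_smul_real (hCpsd i) (inv_nonneg.mpr (hspec i).1)
      · rw [Matrix.trace_smul, (hspec i).2.1, smul_eq_mul, ← Complex.ofReal_mul,
          inv_mul_cancel₀ h0, Complex.ofReal_one]
  · -- D i is a density matrix
    exact fun i => ⟨hDpsd i, hDtr i⟩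
  · -- the decomposition
    have hsmul : ∀ i, (p i : ℂ) • (σ i ⊗ₖ D i) = C i ⊗ₖ D i := by
      intro i
      rw [← Matrix.smul_kronecker, hCσ]
    rw [show (∑ i, (p i : ℂ) • (σ i ⊗ₖ D i)) = ∑ i, C i ⊗ₖ D i from
      Finset.sum_congr rfl fun i _ => hsmul i]
    ext pp qq
    obtain ⟨⟨p11, p12⟩, ⟨p21, p22⟩⟩ := pp
    obtain ⟨⟨q11, q12⟩, ⟨q21, q22⟩⟩ := qq
    rw [Matrix.sum_apply]
    show (d : ℂ)⁻¹ * (d : ℂ)⁻¹ *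
        (T (Matrix.single p12 q12 1)
          (fun ρ => ρ p11 q11 • Matrix.single p22 q22 1)) p21 q21 = _
    rw [hT, Matrix.sum_apply, Finset.mul_sum]
    refine Finset.sum_congr rfl fun i _ => ?_
    rw [Matrix.kroneckerMap_apply]
    have hterm : (Φ i ((I i (Matrix.single p12 q12 1)) p11 q11 •
        Matrix.single p22 q22 1))
        = (I i (Matrix.single p12 q12 1)) p11 q11 •
          Φ i (Matrix.single p22 q22 1) := (hΦlin i).map_smul _ _
    rw [hterm, Matrix.smul_apply, smul_eq_mul]
    rw [hC, hD]
    simp only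
    rw [choiMap_apply hd (hIlin i), choiMap_apply hd (hΦlin i)]
    ring
end

section
/- Upper bound on the maximal-decomposition I-concurrence: for any bipartite density matrix ρ on H₁ ⊗ H₂ with reduced states ρ₁ = tr₂ ρ and ρ₂ = tr₁ ρ, the maximum over pure-state decompositions of the average pure-state concurrence satisfies F^♯[ρ] = max_{{pₖ,ψₖ}} Σₖ pₖ √(2(1 − tr((tr₂|ψₖ⟩⟨ψₖ|)²))) ≤ min{√(2(1 − tr ρ₁²)), √(2(1 − tr ρ₂²))}. -/
open Matrix
open scoped Kronecker Classical ComplexOrder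

noncomputable section Aux

lemma jensen_sq {k : ℕ} (p x : Fin k → ℝ) (hp : ∀ i, 0 ≤ p i) (hp1 : ∑ i, p i = 1) :
    (∑ i, p i * x i)^2 ≤ ∑ i, p i * x i^2 := by
  have h := Finset.sum_mul_sq_le_sq_mul_sq Finset.univ
    (fun i => Real.sqrt (p i)) (fun i => Real.sqrt (p i) * x i)
  have e1 : ∀ i, Real.sqrt (p i) * (Real.sqrt (p i) * x i) = p i * x i := fun i => by
    rw [← mul_assoc, Real.mul_self_sqrt (hp i)]
  have e2 : ∀ i, (Real.sqrt (p i) * x i)^2 = p i * x i^2 := fun i => by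
    rw [mul_pow, Real.sq_sqrt (hp i)]
  simp only [e1, e2, Real.sq_sqrt (hp _)] at h
  calc (∑ i, p i * x i)^2 ≤ (∑ i, p i) * ∑ i, p i * x i^2 := by simpa using h
    _ = ∑ i, p i * x i^2 := by rw [hp1, one_mul]

lemma jensen_sqrt {k : ℕ} (p a : Fin k → ℝ) (hp : ∀ i, 0 ≤ p i) (hp1 : ∑ i, p i = 1)
    (ha : ∀ i, 0 ≤ a i) :
    ∑ i, p i * Real.sqrt (a i) ≤ Real.sqrt (∑ i, p i * a i) := by
  have h := Real.sum_sqrt_mul_sqrt_le Finset.univ (f := p) (g := fun i => p i * a i)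
    hp (fun i => mul_nonneg (hp i) (ha i))
  have e1 : ∀ i, Real.sqrt (p i) * Real.sqrt (p i * a i) = p i * Real.sqrt (a i) := fun i => by
    rw [Real.sqrt_mul (hp i), ← mul_assoc, Real.mul_self_sqrt (hp i)]
  simp only [e1, hp1, Real.sqrt_one, one_mul] at h
  exact h

lemma purity_eq_sum_normSq {N : Type*} [Fintype N] {σ : Matrix N N ℂ} (h : σ.IsHermitian) :
    purity σ = ∑ a, ∑ b, ‖σ a b‖^2 := by
  have key : (σ * σ).trace = ((∑ a, ∑ b, ‖σ a b‖^2 : ℝ) : ℂ) := by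
    push_cast
    rw [Matrix.trace]
    refine Finset.sum_congr rfl fun a _ => ?_
    rw [Matrix.diag_apply, Matrix.mul_apply]
    refine Finset.sum_congr rfl fun b _ => ?_
    rw [← h.apply b a, Complex.star_def, Complex.mul_conj]
    simp [Complex.normSq_eq_norm_sq]
  rw [purity, key, Complex.ofReal_re]

def matOf {m n : Type*} (ψ : m × n → ℂ) : Matrix m n ℂ := Matrix.of fun i j => ψ (i, j)

lemma ptr2_outer {m n : Type*} [Fintype m] [Fintype n] (ψ : m × n → ℂ) :
    ptr₂ (outer ψ) = matOf ψ * (matOf ψ)ᴴ := by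
  ext i k
  simp [ptr₂, outer, matOf, Matrix.mul_apply, Matrix.conjTranspose_apply]

lemma ptr1_outer {m n : Type*} [Fintype m] [Fintype n] (ψ : m × n → ℂ) :
    ptr₁ (outer ψ) = ((matOf ψ)ᴴ * matOf ψ)ᵀ := by
  ext j l
  simp [ptr₁, outer, matOf, Matrix.mul_apply, Matrix.conjTranspose_apply, mul_comm]

lemma ptr2_herm {m n : Type*} [Fintype m] [Fintype n] (ψ : m × n → ℂ) :
    (ptr₂ (outer ψ)).IsHermitian := by
  rw [ptr2_outer]; exact Matrix.isHermitian_mul_conjTranspose_self _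

lemma ptr1_herm {m n : Type*} [Fintype m] [Fintype n] (ψ : m × n → ℂ) :
    (ptr₁ (outer ψ)).IsHermitian := by
  rw [ptr1_outer]
  exact (Matrix.isHermitian_conjTranspose_mul_self _).transpose

lemma purity_symm {m n : Type*} [Fintype m] [Fintype n] (ψ : m × n → ℂ) :
    purity (ptr₁ (outer ψ)) = purity (ptr₂ (outer ψ)) := by
  rw [purity, purity, ptr1_outer, ptr2_outer]
  congr 1
  rw [← Matrix.transpose_mul, Matrix.trace_transpose, Matrix.mul_assoc,
    Matrix.trace_mul_comm]
  simp only [Matrix.mul_assoc]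

lemma ptr2_sum {m n : Type*} [Fintype m] [Fintype n] {k : ℕ} (c : Fin k → ℂ)
    (A : Fin k → Matrix (m × n) (m × n) ℂ) :
    ptr₂ (∑ i, c i • A i) = ∑ i, c i • ptr₂ (A i) := by
  ext a b
  simp only [ptr₂, Matrix.of_apply, Matrix.sum_apply, Matrix.smul_apply, smul_eq_mul,
    Finset.mul_sum]
  rw [Finset.sum_comm]

lemma ptr1_sum {m n : Type*} [Fintype m] [Fintype n] {k : ℕ} (c : Fin k → ℂ)
    (A : Fin k → Matrix (m × n) (m × n) ℂ) :
    ptr₁ (∑ i, c i • A i) = ∑ i, c i • ptr₁ (A i) := by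
  ext a b
  simp only [ptr₁, Matrix.of_apply, Matrix.sum_apply, Matrix.smul_apply, smul_eq_mul,
    Finset.mul_sum]
  rw [Finset.sum_comm]

lemma purity_convex {N : Type*} [Fintype N] {k : ℕ} (p : Fin k → ℝ)
    (σ : Fin k → Matrix N N ℂ) (hp : ∀ i, 0 ≤ p i) (hp1 : ∑ i, p i = 1)
    (hσ : ∀ i, (σ i).IsHermitian) :
    purity (∑ i, (p i : ℂ) • σ i) ≤ ∑ i, p i * purity (σ i) := by
  have hH : (∑ i, (p i : ℂ) • σ i).IsHermitian := by
    unfold Matrix.IsHermitian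
    ext a b
    simp only [Matrix.conjTranspose_apply, Matrix.sum_apply, Matrix.smul_apply, smul_eq_mul,
      star_sum, star_mul']
    refine Finset.sum_congr rfl fun i _ => ?_
    rw [(hσ i).apply, Complex.star_def, Complex.conj_ofReal]
  rw [purity_eq_sum_normSq hH]
  have step : ∀ a b : N, ‖(∑ i, (p i : ℂ) • σ i) a b‖^2 ≤ ∑ i, p i * ‖σ i a b‖^2 := by
    intro a b
    have h1 : ‖(∑ i, (p i : ℂ) • σ i) a b‖ ≤ ∑ i, p i * ‖σ i a b‖ := by
      rw [Matrix.sum_apply]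
      refine (norm_sum_le _ _).trans_eq ?_
      refine Finset.sum_congr rfl fun i _ => ?_
      rw [Matrix.smul_apply, smul_eq_mul, norm_mul, Complex.norm_real,
        Real.norm_eq_abs, abs_of_nonneg (hp i)]
    calc ‖(∑ i, (p i : ℂ) • σ i) a b‖^2 ≤ (∑ i, p i * ‖σ i a b‖)^2 :=
          pow_le_pow_left₀ (norm_nonneg _) h1 2
      _ ≤ ∑ i, p i * ‖σ i a b‖^2 := jensen_sq p _ hp hp1
  calc ∑ a, ∑ b, ‖(∑ i, (p i : ℂ) • σ i) a b‖^2
      ≤ ∑ a, ∑ b, ∑ i, p i * ‖σ i a b‖^2 := by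
        exact Finset.sum_le_sum fun a _ => Finset.sum_le_sum fun b _ => step a b
    _ = ∑ i, p i * purity (σ i) := by
        have h2 : ∀ a : N, ∑ b, ∑ i, p i * ‖σ i a b‖^2 = ∑ i, ∑ b, p i * ‖σ i a b‖^2 :=
          fun a => Finset.sum_comm
        simp_rw [h2]
        rw [Finset.sum_comm]
        refine Finset.sum_congr rfl fun i _ => ?_
        rw [purity_eq_sum_normSq (hσ i), Finset.mul_sum]
        exact Finset.sum_congr rfl fun a _ => (Finset.mul_sum _ _ _).symm

lemma vnormSq_split {m n : Type*} [Fintype m] [Fintype n] (ψ : m × n → ℂ) :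
    vnormSq ψ = ∑ i, ∑ j, ‖ψ (i, j)‖^2 := by
  rw [vnormSq, Fintype.sum_prod_type]

lemma purity_ptr2_le_one {m n : Type*} [Fintype m] [Fintype n] (ψ : m × n → ℂ)
    (hψ : vnormSq ψ = 1) : purity (ptr₂ (outer ψ)) ≤ 1 := by
  rw [purity_eq_sum_normSq (ptr2_herm ψ)]
  have step : ∀ i k : m, ‖ptr₂ (outer ψ) i k‖^2 ≤
      (∑ j, ‖ψ (i, j)‖^2) * (∑ j, ‖ψ (k, j)‖^2) := by
    intro i k
    have h1 : ‖ptr₂ (outer ψ) i k‖ ≤ ∑ j, ‖ψ (i, j)‖ * ‖ψ (k, j)‖ := by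
      show ‖∑ j, ψ (i, j) * star (ψ (k, j))‖ ≤ _
      refine (norm_sum_le _ _).trans_eq ?_
      refine Finset.sum_congr rfl fun j _ => ?_
      rw [norm_mul, norm_star]
    calc ‖ptr₂ (outer ψ) i k‖^2 ≤ (∑ j, ‖ψ (i, j)‖ * ‖ψ (k, j)‖)^2 :=
          pow_le_pow_left₀ (norm_nonneg _) h1 2
      _ ≤ (∑ j, ‖ψ (i, j)‖^2) * (∑ j, ‖ψ (k, j)‖^2) :=
          Finset.sum_mul_sq_le_sq_mul_sq _ _ _
  calc ∑ i, ∑ k, ‖ptr₂ (outer ψ) i k‖^2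
      ≤ ∑ i, ∑ k, (∑ j, ‖ψ (i, j)‖^2) * (∑ j, ‖ψ (k, j)‖^2) :=
        Finset.sum_le_sum fun i _ => Finset.sum_le_sum fun k _ => step i k
    _ = (∑ i, ∑ j, ‖ψ (i, j)‖^2) * (∑ k, ∑ j, ‖ψ (k, j)‖^2) := by
        rw [Finset.sum_mul]
        exact Finset.sum_congr rfl fun i _ => by rw [← Finset.mul_sum]
    _ = 1 := by rw [← vnormSq_split, hψ, one_mul]

end Aux

/-- purity-based upper bound on the maximal-decomposition average
concurrence: `F^♯[ρ] ≤ min{√(2(1 − tr ρ₁²)), √(2(1 − tr ρ₂²))}`. -/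
theorem stmt17 {m n : Type*} [Fintype m] [Fintype n]
    (ρ : Matrix (m × n) (m × n) ℂ) (hρ : IsDensity ρ) :
    sSup (decompAvgs concPure ρ) ≤
      min (Real.sqrt (2 * (1 - purity (ptr₂ ρ)))) (Real.sqrt (2 * (1 - purity (ptr₁ ρ)))) := by
  apply Real.sSup_le
  · rintro r ⟨k, p, ψ, hp, hp1, hψ, hdec, hr⟩
    have hp' : ∀ i, 0 ≤ p i := fun i => (hp i).le
    have hu1 : ∀ i, purity (ptr₂ (outer (ψ i))) ≤ 1 := fun i => purity_ptr2_le_one _ (hψ i)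
    have ha : ∀ i, 0 ≤ 2 * (1 - purity (ptr₂ (outer (ψ i)))) := fun i => by linarith [hu1 i]
    have hsum : ∑ i, p i * (2 * (1 - purity (ptr₂ (outer (ψ i))))) =
        2 * (1 - ∑ i, p i * purity (ptr₂ (outer (ψ i)))) := by
      have h0 : ∀ i ∈ Finset.univ, p i * (2 * (1 - purity (ptr₂ (outer (ψ i))))) =
          2 * p i - 2 * (p i * purity (ptr₂ (outer (ψ i)))) := fun i _ => by ring
      rw [Finset.sum_congr rfl h0, Finset.sum_sub_distrib, ← Finset.mul_sum, ← Finset.mul_sum,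
        hp1]
      ring
    have hbound : r ≤ Real.sqrt (2 * (1 - ∑ i, p i * purity (ptr₂ (outer (ψ i))))) := by
      rw [hr]
      simp only [concPure]
      exact (jensen_sqrt p _ hp' hp1 ha).trans_eq (by rw [hsum])
    have hc2 : purity (ptr₂ ρ) ≤ ∑ i, p i * purity (ptr₂ (outer (ψ i))) := by
      rw [hdec, ptr2_sum]
      exact purity_convex p _ hp' hp1 (fun i => ptr2_herm (ψ i))
    have hc1 : purity (ptr₁ ρ) ≤ ∑ i, p i * purity (ptr₂ (outer (ψ i))) := by
      rw [hdec, ptr1_sum]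
      refine (purity_convex p _ hp' hp1 (fun i => ptr1_herm (ψ i))).trans_eq ?_
      exact Finset.sum_congr rfl fun i _ => by rw [purity_symm]
    refine le_min (hbound.trans ?_) (hbound.trans ?_)
    · exact Real.sqrt_le_sqrt (by linarith)
    · exact Real.sqrt_le_sqrt (by linarith)
  · exact le_min (Real.sqrt_nonneg _) (Real.sqrt_nonneg _)
end
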